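/- Let k₁, k₂, m₁, m₂, M₁, M₂ be positive constants with m₁ < M₁ and m₂ < M₂, and let P, Q : [0,∞) → ℝ be continuous with m₁ < P < M₁ and -M₂ < Q < -m₂. Define s(t) = (k₁+k₂)t, R_v(t) = k₁ e^{k₁ t} ∫₀ᵗ e^{-k₁ t'} P dt' + P(t), R_u(t) = k₂ e^{k₂ t} ∫₀ᵗ e^{-k₂ t'} Q dt' + Q(t), and u, v by u(0)=v(0)=0, u' = e^{-s} R_v, v' = -e^{-s} R_u. Then as t → ∞: s(t) → ∞, u(t) converges to a finite limit ≤ M₁/k₂, and v(t) converges to a finite limit ≤ M₂/k₁. -/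

import Mathlib

open Filter Real intervalIntegral

private lemma anti_exp (c A t : ℝ) (hc : 0 < c) :
    ∫ x in (0:ℝ)..t, A * Real.exp (-(c * x)) = A / c * (1 - Real.exp (-(c * t))) := by
  have h : ∀ x ∈ Set.uIcc (0:ℝ) t,
      HasDerivAt (fun x => -(A / c) * Real.exp (-(c * x))) (A * Real.exp (-(c * x))) x := by
    intro x _
    have h1 : HasDerivAt (fun x : ℝ => -(c * x)) (-c) x := by
      simpa using ((hasDerivAt_id x).const_mul (-c))
    have h2 := (h1.exp).const_mul (-(A / c))
    refine h2.congr_deriv ?_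
    field_simp
  have hint : IntervalIntegrable (fun x => A * Real.exp (-(c * x))) MeasureTheory.volume 0 t :=
    (Continuous.intervalIntegrable (continuous_const.mul (Real.continuous_exp.comp ((continuous_const.mul continuous_id).neg))) 0 t)
  rw [intervalIntegral.integral_eq_sub_of_hasDerivAt h hint]
  field_simp
  rw [mul_zero, neg_zero, Real.exp_zero]
  ring

private lemma key_conv (c B : ℝ) (hc : 0 < c) (f f' : ℝ → ℝ) (hf0 : f 0 = 0)
    (hderiv : ∀ t ∈ Set.Ici (0:ℝ), HasDerivAt f (f' t) t)
    (h0 : ∀ t ∈ Set.Ici (0:ℝ), 0 ≤ f' t)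
    (hB : ∀ t ∈ Set.Ici (0:ℝ), f' t ≤ B * Real.exp (-(c * t))) :
    ∃ L, Tendsto f atTop (nhds L) ∧ L ≤ B / c := by
  have hBpos : 0 ≤ B := by
    have h1 := h0 0 (Set.mem_Ici.mpr le_rfl)
    have h2 := hB 0 (Set.mem_Ici.mpr le_rfl)
    simp at h2
    linarith
  -- monotonicity of f on Ici 0
  have hmono : MonotoneOn f (Set.Ici 0) := by
    apply monotoneOn_of_deriv_nonneg (convex_Ici 0)
    · exact fun t ht => ((hderiv t ht).continuousAt).continuousWithinAt
    · intro t ht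
      rw [interior_Ici] at ht
      exact ((hderiv t (Set.mem_Ici.mpr (le_of_lt ht))).differentiableAt).differentiableWithinAt
    · intro t ht
      rw [interior_Ici] at ht
      rw [(hderiv t (Set.mem_Ici.mpr (le_of_lt ht))).deriv]
      exact h0 t (Set.mem_Ici.mpr (le_of_lt ht))
  -- upper bound f t ≤ B / c on Ici 0
  have hbound : ∀ t ∈ Set.Ici (0:ℝ), f t ≤ B / c := by
    set g : ℝ → ℝ := fun t => B / c * (1 - Real.exp (-(c * t))) - f t with hg
    have hg0 : g 0 = 0 := by simp [hg, hf0]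
    have hgd : ∀ t ∈ Set.Ici (0:ℝ),
        HasDerivAt g (B * Real.exp (-(c * t)) - f' t) t := by
      intro t ht
      have h1 : HasDerivAt (fun x : ℝ => -(c * x)) (-c) t := by
        simpa using ((hasDerivAt_id t).const_mul (-c))
      have h2 : HasDerivAt (fun x => B / c * (1 - Real.exp (-(c * x))))
          (B * Real.exp (-(c * t))) t := by
        have h3 := ((hasDerivAt_const t (1:ℝ)).sub h1.exp).const_mul (B / c)
        refine h3.congr_deriv ?_
        field_simp
        ring
      exact h2.sub (hderiv t ht)
    have hgmono : MonotoneOn g (Set.Ici 0) := by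
      apply monotoneOn_of_deriv_nonneg (convex_Ici 0)
      · exact fun t ht => ((hgd t ht).continuousAt).continuousWithinAt
      · intro t ht
        rw [interior_Ici] at ht
        exact ((hgd t (Set.mem_Ici.mpr (le_of_lt ht))).differentiableAt).differentiableWithinAt
      · intro t ht
        rw [interior_Ici] at ht
        rw [(hgd t (Set.mem_Ici.mpr (le_of_lt ht))).deriv]
        have := hB t (Set.mem_Ici.mpr (le_of_lt ht))
        linarith
    intro t ht
    have := hgmono (le_refl (0:ℝ)) ht ht
    rw [hg0] at this
    have he : 0 < Real.exp (-(c * t)) := Real.exp_pos _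
    have : f t ≤ B / c * (1 - Real.exp (-(c * t))) := by
      simp only [hg] at this; linarith
    have h4 : B / c * (1 - Real.exp (-(c * t))) ≤ B / c := by
      have : 0 ≤ B / c := by positivity
      nlinarith
    linarith
  -- define the monotone extension F
  set F : ℝ → ℝ := fun t => f (max t 0) with hF
  have hFmono : Monotone F := by
    intro a b hab
    exact hmono (le_max_right a 0) (le_max_right b 0) (max_le_max hab le_rfl)
  have hFbdd : BddAbove (Set.range F) := by
    refine ⟨B / c, ?_⟩
    rintro _ ⟨t, rfl⟩
    exact hbound _ (le_max_right t 0)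
  have hFt : Tendsto F atTop (nhds (⨆ t, F t)) := tendsto_atTop_ciSup hFmono hFbdd
  refine ⟨⨆ t, F t, ?_, ?_⟩
  · apply hFt.congr'
    filter_upwards [eventually_ge_atTop (0:ℝ)] with t ht
    simp [hF, max_eq_left ht]
  · exact ciSup_le fun t => hbound _ (le_max_right t 0)

/-- Proposition 5.1 (finite-time blowup on `R = R_a`):
`s(t) → ∞` while `u` and `v` converge to finite limits bounded by
`M₁/k₂` and `M₂/k₁` respectively. -/
theorem stmt_5 (k₁ k₂ m₁ m₂ M₁ M₂ : ℝ)
    (hk₁ : 0 < k₁) (hk₂ : 0 < k₂) (hm₁ : 0 < m₁) (hm₂ : 0 < m₂)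
    (hM₁ : m₁ < M₁) (hM₂ : m₂ < M₂)
    (P Q : ℝ → ℝ) (hPc : ContinuousOn P (Set.Ici 0)) (hQc : ContinuousOn Q (Set.Ici 0))
    (hP : ∀ t ∈ Set.Ici (0 : ℝ), m₁ < P t ∧ P t < M₁)
    (hQ : ∀ t ∈ Set.Ici (0 : ℝ), -M₂ < Q t ∧ Q t < -m₂)
    (s Rv Ru u v : ℝ → ℝ)
    (hs : ∀ t, s t = (k₁ + k₂) * t)
    (hRv : ∀ t, Rv t =
      k₁ * Real.exp (k₁ * t) * (∫ t' in (0 : ℝ)..t, Real.exp (-(k₁ * t')) * P t') + P t)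
    (hRu : ∀ t, Ru t =
      k₂ * Real.exp (k₂ * t) * (∫ t' in (0 : ℝ)..t, Real.exp (-(k₂ * t')) * Q t') + Q t)
    (hu0 : u 0 = 0) (hv0 : v 0 = 0)
    (hu : ∀ t ∈ Set.Ici (0 : ℝ), HasDerivAt u (Real.exp (-(s t)) * Rv t) t)
    (hv : ∀ t ∈ Set.Ici (0 : ℝ), HasDerivAt v (-(Real.exp (-(s t)) * Ru t)) t) :
    Tendsto s atTop atTop ∧
    (∃ L₁, Tendsto u atTop (nhds L₁) ∧ L₁ ≤ M₁ / k₂) ∧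
    (∃ L₂, Tendsto v atTop (nhds L₂) ∧ L₂ ≤ M₂ / k₁) := by
  have hsfun : s = fun t => (k₁ + k₂) * t := funext hs
  refine ⟨?_, ?_, ?_⟩
  · rw [hsfun]
    exact Tendsto.const_mul_atTop (by linarith) tendsto_id
  -- u part
  · -- bounds on Rv for t ≥ 0
    have hRvbounds : ∀ t ∈ Set.Ici (0:ℝ), 0 ≤ Rv t ∧ Rv t ≤ M₁ * Real.exp (k₁ * t) := by
      intro t ht
      have hint1 : IntervalIntegrable (fun t' => Real.exp (-(k₁ * t')) * P t')
          MeasureTheory.volume 0 t := by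
        apply ContinuousOn.intervalIntegrable
        apply ContinuousOn.mul (Continuous.continuousOn (Real.continuous_exp.comp ((continuous_const.mul continuous_id).neg)))
        apply hPc.mono
        rw [Set.uIcc_of_le ht]
        exact Set.Icc_subset_Ici_self
      have hint2 : IntervalIntegrable (fun t' => M₁ * Real.exp (-(k₁ * t')))
          MeasureTheory.volume 0 t :=
        Continuous.intervalIntegrable (continuous_const.mul (Real.continuous_exp.comp ((continuous_const.mul continuous_id).neg))) 0 t
      have hIle : (∫ t' in (0:ℝ)..t, Real.exp (-(k₁ * t')) * P t')
          ≤ M₁ / k₁ * (1 - Real.exp (-(k₁ * t))) := by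
        rw [← anti_exp k₁ M₁ t hk₁]
        apply intervalIntegral.integral_mono_on ht hint1 hint2
        intro x hx
        have hPx := (hP x (by exact hx.1)).2
        have he : 0 < Real.exp (-(k₁ * x)) := Real.exp_pos _
        nlinarith
      have hIge : 0 ≤ ∫ t' in (0:ℝ)..t, Real.exp (-(k₁ * t')) * P t' := by
        apply intervalIntegral.integral_nonneg ht
        intro x hx
        have hPx := (hP x hx.1).1
        have he : 0 < Real.exp (-(k₁ * x)) := Real.exp_pos _
        nlinarith
      have hPt := hP t ht
      constructor
      · rw [hRv]
        have : 0 ≤ k₁ * Real.exp (k₁ * t) := by positivity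
        nlinarith
      · rw [hRv]
        have hee : Real.exp (k₁ * t) * Real.exp (-(k₁ * t)) = 1 := by
          rw [← Real.exp_add]; simp
        have h1 : k₁ * Real.exp (k₁ * t) * (∫ t' in (0:ℝ)..t, Real.exp (-(k₁ * t')) * P t')
            ≤ k₁ * Real.exp (k₁ * t) * (M₁ / k₁ * (1 - Real.exp (-(k₁ * t)))) := by
          apply mul_le_mul_of_nonneg_left hIle (by positivity)
        have h2 : k₁ * Real.exp (k₁ * t) * (M₁ / k₁ * (1 - Real.exp (-(k₁ * t))))
            = M₁ * Real.exp (k₁ * t) - M₁ := by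
          field_simp
          linear_combination (-M₁) * hee
        nlinarith [hPt.2]
    have := key_conv k₂ M₁ hk₂ u (fun t => Real.exp (-(s t)) * Rv t) hu0 hu ?_ ?_
    · exact this
    · intro t ht
      have h := (hRvbounds t ht).1
      show (0:ℝ) ≤ Real.exp (-(s t)) * Rv t
      positivity
    · intro t ht
      have hb := (hRvbounds t ht).2
      have he : 0 < Real.exp (-(s t)) := Real.exp_pos _
      show Real.exp (-(s t)) * Rv t ≤ M₁ * Real.exp (-(k₂ * t))
      have heq : Real.exp (-(s t)) * (M₁ * Real.exp (k₁ * t)) = M₁ * Real.exp (-(k₂ * t)) := by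
        rw [hs, mul_comm (Real.exp _) _, mul_assoc, ← Real.exp_add]
        ring_nf
      calc Real.exp (-(s t)) * Rv t ≤ Real.exp (-(s t)) * (M₁ * Real.exp (k₁ * t)) :=
            mul_le_mul_of_nonneg_left hb he.le
        _ = M₁ * Real.exp (-(k₂ * t)) := heq
  -- v part
  · have hRubounds : ∀ t ∈ Set.Ici (0:ℝ), Ru t ≤ 0 ∧ -(M₂ * Real.exp (k₂ * t)) ≤ Ru t := by
      intro t ht
      have hint1 : IntervalIntegrable (fun t' => Real.exp (-(k₂ * t')) * Q t')
          MeasureTheory.volume 0 t := by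
        apply ContinuousOn.intervalIntegrable
        apply ContinuousOn.mul (Continuous.continuousOn (Real.continuous_exp.comp ((continuous_const.mul continuous_id).neg)))
        apply hQc.mono
        rw [Set.uIcc_of_le ht]
        exact Set.Icc_subset_Ici_self
      have hint2 : IntervalIntegrable (fun t' => (-M₂) * Real.exp (-(k₂ * t')))
          MeasureTheory.volume 0 t :=
        Continuous.intervalIntegrable (continuous_const.mul (Real.continuous_exp.comp ((continuous_const.mul continuous_id).neg))) 0 t
      have hIge : (-M₂) / k₂ * (1 - Real.exp (-(k₂ * t)))
          ≤ ∫ t' in (0:ℝ)..t, Real.exp (-(k₂ * t')) * Q t' := by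
        rw [← anti_exp k₂ (-M₂) t hk₂]
        apply intervalIntegral.integral_mono_on ht hint2 hint1
        intro x hx
        have hQx := (hQ x hx.1).1
        have he : 0 < Real.exp (-(k₂ * x)) := Real.exp_pos _
        nlinarith
      have hIle : (∫ t' in (0:ℝ)..t, Real.exp (-(k₂ * t')) * Q t') ≤ 0 := by
        have hneg : 0 ≤ ∫ t' in (0:ℝ)..t, -(Real.exp (-(k₂ * t')) * Q t') := by
          apply intervalIntegral.integral_nonneg ht
          intro x hx
          have hQx := (hQ x hx.1).2
          have he : 0 < Real.exp (-(k₂ * x)) := Real.exp_pos _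
          nlinarith
        rw [intervalIntegral.integral_neg] at hneg
        linarith
      have hQt := hQ t ht
      constructor
      · rw [hRu]
        have : 0 ≤ k₂ * Real.exp (k₂ * t) := by positivity
        nlinarith [hQt.2]
      · rw [hRu]
        have hee : Real.exp (k₂ * t) * Real.exp (-(k₂ * t)) = 1 := by
          rw [← Real.exp_add]; simp
        have h1 : k₂ * Real.exp (k₂ * t) * ((-M₂) / k₂ * (1 - Real.exp (-(k₂ * t))))
            ≤ k₂ * Real.exp (k₂ * t) * (∫ t' in (0:ℝ)..t, Real.exp (-(k₂ * t')) * Q t') :=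
          mul_le_mul_of_nonneg_left hIge (by positivity)
        have h2 : k₂ * Real.exp (k₂ * t) * ((-M₂) / k₂ * (1 - Real.exp (-(k₂ * t))))
            = -(M₂ * Real.exp (k₂ * t)) + M₂ := by
          field_simp
          linear_combination M₂ * hee
        nlinarith [hQt.1]
    have := key_conv k₁ M₂ hk₁ v (fun t => -(Real.exp (-(s t)) * Ru t)) hv0 hv ?_ ?_
    · exact this
    · intro t ht
      have h := (hRubounds t ht).1
      have he : 0 < Real.exp (-(s t)) := Real.exp_pos _
      show (0:ℝ) ≤ -(Real.exp (-(s t)) * Ru t)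
      nlinarith
    · intro t ht
      have hb := (hRubounds t ht).2
      have he : 0 < Real.exp (-(s t)) := Real.exp_pos _
      show -(Real.exp (-(s t)) * Ru t) ≤ M₂ * Real.exp (-(k₁ * t))
      have heq : Real.exp (-(s t)) * (M₂ * Real.exp (k₂ * t)) = M₂ * Real.exp (-(k₁ * t)) := by
        rw [hs, mul_comm (Real.exp _) _, mul_assoc, ← Real.exp_add]
        ring_nf
      have h1 : -(Real.exp (-(s t)) * Ru t) ≤ Real.exp (-(s t)) * (M₂ * Real.exp (k₂ * t)) := by
        nlinarith
      calc -(Real.exp (-(s t)) * Ru t) ≤ Real.exp (-(s t)) * (M₂ * Real.exp (k₂ * t)) := h1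
        _ = M₂ * Real.exp (-(k₁ * t)) := heq
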